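/- Let α₀, α₁, α₂ ∈ ℂ, let U ⊆ ℂ be a nonempty open set, and let f₀, f₁, f₂ : U → ℂ be holomorphic functions satisfying the symmetric PIV system with constants (α₀,α₁,α₂), with f₁ nowhere zero on U. Then f₁ is twice differentiable and satisfies on U the second-order equation f₁'' = (f₁')²/(2f₁) + (3/2)f₁³ − 2t f₁² + (t²/2 + (α₂ − α₀)) f₁ − α₁²/(2f₁). -/

import Mathlib

/-- If holomorphic `f₀,f₁,f₂` satisfy the symmetric PIV system with constants
`(α₀,α₁,α₂)` on a nonempty open set `U` and `f₁` is nowhere zero, then `f₁` is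
twice differentiable and satisfies
`f₁'' = (f₁')²/(2f₁) + (3/2)f₁³ − 2t f₁² + (t²/2 + (α₂ − α₀)) f₁ − α₁²/(2f₁)` on `U`. -/
theorem stmt_12 (α₀ α₁ α₂ : ℂ) (U : Set ℂ) (hU : IsOpen U) (hne : U.Nonempty)
    (f₀ f₁ f₂ : ℂ → ℂ)
    (hf₀ : ∀ t ∈ U, DifferentiableAt ℂ f₀ t)
    (hf₁ : ∀ t ∈ U, DifferentiableAt ℂ f₁ t)
    (hf₂ : ∀ t ∈ U, DifferentiableAt ℂ f₂ t)
    (hsum : ∀ t ∈ U, f₀ t + f₁ t + f₂ t = t)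
    (heq₀ : ∀ t ∈ U, deriv f₀ t = f₀ t * (f₁ t - f₂ t) + α₀)
    (heq₁ : ∀ t ∈ U, deriv f₁ t = f₁ t * (f₂ t - f₀ t) + α₁)
    (heq₂ : ∀ t ∈ U, deriv f₂ t = f₂ t * (f₀ t - f₁ t) + α₂)
    (hnz : ∀ t ∈ U, f₁ t ≠ 0) :
    ∀ t ∈ U, DifferentiableAt ℂ (deriv f₁) t ∧
      deriv (deriv f₁) t =
        (deriv f₁ t) ^ 2 / (2 * f₁ t) + (3/2) * (f₁ t) ^ 3 - 2 * t * (f₁ t) ^ 2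
          + (t ^ 2 / 2 + (α₂ - α₀)) * f₁ t - α₁ ^ 2 / (2 * f₁ t) := by
  intro t ht
  have hnhds : U ∈ nhds t := hU.mem_nhds ht
  have hEq : deriv f₁ =ᶠ[nhds t] fun x => f₁ x * (f₂ x - f₀ x) + α₁ :=
    Filter.eventuallyEq_of_mem hnhds heq₁
  have hdiff : DifferentiableAt ℂ (fun x => f₁ x * (f₂ x - f₀ x) + α₁) t :=
    ((hf₁ t ht).mul ((hf₂ t ht).sub (hf₀ t ht))).add_const α₁
  refine ⟨hdiff.congr_of_eventuallyEq hEq, ?_⟩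
  have hderiv : deriv (deriv f₁) t = deriv (fun x => f₁ x * (f₂ x - f₀ x) + α₁) t :=
    hEq.deriv_eq
  rw [hderiv, deriv_add_const, deriv_fun_mul (d := fun x => f₂ x - f₀ x) (hf₁ t ht) ((hf₂ t ht).sub (hf₀ t ht)),
    deriv_fun_sub (hf₂ t ht) (hf₀ t ht), heq₀ t ht, heq₁ t ht, heq₂ t ht]
  have h0 : f₀ t = t - f₁ t - f₂ t := by linear_combination hsum t ht
  rw [h0]
  have hz := hnz t ht
  have h2 : (2 : ℂ) * f₁ t ≠ 0 := mul_ne_zero two_ne_zero hz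
  have key :
      ((f₁ t * (f₂ t - (t - f₁ t - f₂ t)) + α₁) * (f₂ t - (t - f₁ t - f₂ t)) +
          f₁ t * (f₂ t * (t - f₁ t - f₂ t - f₁ t) + α₂ -
            ((t - f₁ t - f₂ t) * (f₁ t - f₂ t) + α₀))) -
        (3 / 2 * f₁ t ^ 3 - 2 * t * f₁ t ^ 2 + (t ^ 2 / 2 + (α₂ - α₀)) * f₁ t) =
      ((f₁ t * (f₂ t - (t - f₁ t - f₂ t)) + α₁) ^ 2 - α₁ ^ 2) / (2 * f₁ t) := by
    rw [eq_div_iff h2]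
    ring
  linear_combination key
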